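/- Let H, σ : ℝ³ → M₃(ℝ) be differentiable symmetric trace-free matrix fields and ω, a : ℝ³ → ℝ³ differentiable vector fields, satisfying pointwise [σ,H] = 3Hω, curl H = −2 a∧H, and H = curl σ + (Dω)^ + 2 a⊗̂ω. Then pointwise div[σ,H] = Tr H² − ⟨H, Dω⟩ − 8⟨a, Hω⟩, where [σ,H] denotes the vector field x ↦ [σ(x),H(x)] and Tr H² = ⟨H,H⟩ since H is symmetric. -/

import Mathlib

open Matrix BigOperators
open scoped RealInnerProductSpace

noncomputable section

/-- Vectors in ℝ³. -/
abbrev V3 := Fin 3 → ℝ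

/-- 3×3 real matrices. -/
abbrev M3 := Matrix (Fin 3) (Fin 3) ℝ

/-- The Levi-Civita symbol on three indices. -/
def eps (a b c : Fin 3) : ℝ :=
  if (a, b, c) = (0, 1, 2) ∨ (a, b, c) = (1, 2, 0) ∨ (a, b, c) = (2, 0, 1) then 1
  else if (a, b, c) = (0, 2, 1) ∨ (a, b, c) = (2, 1, 0) ∨ (a, b, c) = (1, 0, 2) then -1
  else 0

/-- The Frobenius inner product ⟨A,B⟩ = Σ_{i,j} A_{ij} B_{ij}. -/
def frob (A B : M3) : ℝ := ∑ i, ∑ j, A i j * B i j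

/-- The Euclidean inner product on ℝ³. -/
def dot3 (v w : V3) : ℝ := ∑ a, v a * w a

/-- The generalized vector product of two 3×3 matrices:
    [A,B]_a = Σ_{b,c} ε_{abc} (AB)_{bc}. -/
def mcross (A B : M3) : V3 := fun a => ∑ b, ∑ c, eps a b c * (A * B) b c

/-- v ∧ B : (v∧B)_{ab} = ½ Σ_{c,d} (ε_{acd} v_c B_{db} + ε_{bcd} v_c B_{da}). -/
def vwedge (v : V3) (B : M3) : M3 := fun a b =>
  (1 / 2 : ℝ) * ∑ c, ∑ d, (eps a c d * v c * B d b + eps b c d * v c * B d a)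

/-- The tensor product (a⊗ω)_{ij} = a_i ω_j. -/
def tens (a ω : V3) : M3 := fun i j => a i * ω j

/-- The trace-free symmetric part X^ = ½(X+Xᵀ) − (1/3)(Tr X)·I. -/
def hat (X : M3) : M3 := (1 / 2 : ℝ) • (X + Xᵀ) - ((1 / 3 : ℝ) * X.trace) • (1 : M3)

/-- The partial derivative ∂_c f at x of a scalar field f : ℝ³ → ℝ. -/
def pd (c : Fin 3) (f : V3 → ℝ) (x : V3) : ℝ := fderiv ℝ f x (Pi.single c 1)

/-- The curl of a matrix field:
    (curl A)_{ab} = ½ Σ_{c,d} (ε_{acd} ∂_c A_{db} + ε_{bcd} ∂_c A_{da}). -/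
def curlM (A : V3 → M3) (x : V3) : M3 := fun a b =>
  (1 / 2 : ℝ) * ∑ c, ∑ d,
    (eps a c d * pd c (fun y => A y d b) x + eps b c d * pd c (fun y => A y d a) x)

/-- The divergence of a vector field: div w = Σ_a ∂_a w_a. -/
def divV (w : V3 → V3) (x : V3) : ℝ := ∑ a, pd a (fun y => w y a) x

/-- The divergence of a matrix field: (div A)_b = Σ_a ∂_a A_{ab}. -/
def divM (A : V3 → M3) (x : V3) : V3 := fun b => ∑ a, pd a (fun y => A y a b) x

/-- The Jacobian matrix field (Dw)_{ab} = ∂_a w_b. -/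
def jac (w : V3 → V3) (x : V3) : M3 := fun a b => pd a (fun y => w y b) x

lemma epsv000 : eps 0 0 0 = 0 := rfl
lemma epsv001 : eps 0 0 1 = 0 := rfl
lemma epsv002 : eps 0 0 2 = 0 := rfl
lemma epsv010 : eps 0 1 0 = 0 := rfl
lemma epsv011 : eps 0 1 1 = 0 := rfl
lemma epsv012 : eps 0 1 2 = 1 := rfl
lemma epsv020 : eps 0 2 0 = 0 := rfl
lemma epsv021 : eps 0 2 1 = (-1) := rfl
lemma epsv022 : eps 0 2 2 = 0 := rfl
lemma epsv100 : eps 1 0 0 = 0 := rfl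
lemma epsv101 : eps 1 0 1 = 0 := rfl
lemma epsv102 : eps 1 0 2 = (-1) := rfl
lemma epsv110 : eps 1 1 0 = 0 := rfl
lemma epsv111 : eps 1 1 1 = 0 := rfl
lemma epsv112 : eps 1 1 2 = 0 := rfl
lemma epsv120 : eps 1 2 0 = 1 := rfl
lemma epsv121 : eps 1 2 1 = 0 := rfl
lemma epsv122 : eps 1 2 2 = 0 := rfl
lemma epsv200 : eps 2 0 0 = 0 := rfl
lemma epsv201 : eps 2 0 1 = 1 := rfl
lemma epsv202 : eps 2 0 2 = 0 := rfl
lemma epsv210 : eps 2 1 0 = (-1) := rfl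
lemma epsv211 : eps 2 1 1 = 0 := rfl
lemma epsv212 : eps 2 1 2 = 0 := rfl
lemma epsv220 : eps 2 2 0 = 0 := rfl
lemma epsv221 : eps 2 2 1 = 0 := rfl
lemma epsv222 : eps 2 2 2 = 0 := rfl

lemma pd_sum (c : Fin 3) (f : Fin 3 → V3 → ℝ) (hf : ∀ i, Differentiable ℝ (f i)) (x : V3) :
    pd c (fun y => ∑ i, f i y) x = ∑ i, pd c (f i) x := by
  unfold pd
  rw [fderiv_fun_sum (fun i _ => (hf i).differentiableAt)]
  simp

lemma pd_const_mul (c : Fin 3) (r : ℝ) (f : V3 → ℝ) (hf : Differentiable ℝ f) (x : V3) :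
    pd c (fun y => r * f y) x = r * pd c f x := by
  unfold pd
  rw [fderiv_const_mul hf.differentiableAt]
  simp

lemma pd_mul (c : Fin 3) (f g : V3 → ℝ) (hf : Differentiable ℝ f) (hg : Differentiable ℝ g) (x : V3) :
    pd c (fun y => f y * g y) x = pd c f x * g x + f x * pd c g x := by
  unfold pd
  rw [fderiv_fun_mul hf.differentiableAt hg.differentiableAt]
  simp [mul_comm]
  ring

lemma pd_mcross (σ H : V3 → M3)
    (hσ : ∀ i j, Differentiable ℝ fun x => σ x i j)
    (hH : ∀ i j, Differentiable ℝ fun x => H x i j) (A : Fin 3) (x : V3) :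
    pd A (fun y => mcross (σ y) (H y) A) x
      = ∑ b, ∑ c, eps A b c *
          ∑ d, (pd A (fun y => σ y b d) x * H x d c + σ x b d * pd A (fun y => H y d c) x) := by
  have h1 : (fun y => mcross (σ y) (H y) A)
      = fun y => ∑ b, ∑ c, eps A b c * ∑ d, σ y b d * H y d c := by
    funext y; simp [mcross, Matrix.mul_apply]
  rw [h1, pd_sum A _ (fun b => Differentiable.fun_sum fun c _ =>
    (Differentiable.fun_sum fun d _ => (hσ b d).fun_mul (hH d c)).const_mul _)]
  refine Finset.sum_congr rfl fun b _ => ?_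
  rw [pd_sum A _ (fun c => (Differentiable.fun_sum fun d _ => (hσ b d).fun_mul (hH d c)).const_mul _)]
  refine Finset.sum_congr rfl fun c _ => ?_
  rw [pd_const_mul A _ _ (Differentiable.fun_sum fun d _ => (hσ b d).fun_mul (hH d c)),
    pd_sum A _ (fun d => (hσ b d).fun_mul (hH d c))]
  congr 1
  exact Finset.sum_congr rfl fun d _ => pd_mul A _ _ (hσ b d) (hH d c) x

/-- from [σ,H] = 3Hω, curl H = −2 a∧H and
    H = curl σ + (Dω)^ + 2 a⊗̂ω one gets
    div[σ,H] = Tr H² − ⟨H, Dω⟩ − 8⟨a, Hω⟩. -/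
theorem stmt_4 (H σ : V3 → M3) (ω a : V3 → V3)
    (hH : ∀ i j, Differentiable ℝ fun x => H x i j)
    (hσ : ∀ i j, Differentiable ℝ fun x => σ x i j)
    (hω : ∀ i, Differentiable ℝ fun x => ω x i)
    (ha : ∀ i, Differentiable ℝ fun x => a x i)
    (hHsym : ∀ x, (H x)ᵀ = H x) (hHtf : ∀ x, (H x).trace = 0)
    (hσsym : ∀ x, (σ x)ᵀ = σ x) (hσtf : ∀ x, (σ x).trace = 0)
    (hbi1 : ∀ x, mcross (σ x) (H x) = (3 : ℝ) • (H x).mulVec (ω x))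
    (hbi3 : ∀ x, curlM H x = -(2 : ℝ) • vwedge (a x) (H x))
    (hRicci : ∀ x, H x = curlM σ x + hat (jac ω x) + (2 : ℝ) • hat (tens (a x) (ω x))) :
    ∀ x, divV (fun y => mcross (σ y) (H y)) x
      = (H x * H x).trace - frob (H x) (jac ω x)
        - 8 * dot3 (a x) ((H x).mulVec (ω x)) := by

  intro x
  have e10 := congrFun (hbi1 x) 0
  have e11 := congrFun (hbi1 x) 1
  have e12 := congrFun (hbi1 x) 2
  have e300 := congrFun (congrFun (hbi3 x) 0) 0
  have eR00 := congrFun (congrFun (hRicci x) 0) 0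
  have e301 := congrFun (congrFun (hbi3 x) 0) 1
  have eR01 := congrFun (congrFun (hRicci x) 0) 1
  have e302 := congrFun (congrFun (hbi3 x) 0) 2
  have eR02 := congrFun (congrFun (hRicci x) 0) 2
  have e310 := congrFun (congrFun (hbi3 x) 1) 0
  have eR10 := congrFun (congrFun (hRicci x) 1) 0
  have e311 := congrFun (congrFun (hbi3 x) 1) 1
  have eR11 := congrFun (congrFun (hRicci x) 1) 1
  have e312 := congrFun (congrFun (hbi3 x) 1) 2
  have eR12 := congrFun (congrFun (hRicci x) 1) 2
  have e320 := congrFun (congrFun (hbi3 x) 2) 0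
  have eR20 := congrFun (congrFun (hRicci x) 2) 0
  have e321 := congrFun (congrFun (hbi3 x) 2) 1
  have eR21 := congrFun (congrFun (hRicci x) 2) 1
  have e322 := congrFun (congrFun (hbi3 x) 2) 2
  have eR22 := congrFun (congrFun (hRicci x) 2) 2

  have cH10 : H x 1 0 = H x 0 1 := by
    have h := congrFun (congrFun (hHsym x) 0) 1; simpa using h
  have cH20 : H x 2 0 = H x 0 2 := by
    have h := congrFun (congrFun (hHsym x) 0) 2; simpa using h
  have cH21 : H x 2 1 = H x 1 2 := by
    have h := congrFun (congrFun (hHsym x) 1) 2; simpa using h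
  have cS10 : σ x 1 0 = σ x 0 1 := by
    have h := congrFun (congrFun (hσsym x) 0) 1; simpa using h
  have cS20 : σ x 2 0 = σ x 0 2 := by
    have h := congrFun (congrFun (hσsym x) 0) 2; simpa using h
  have cS21 : σ x 2 1 = σ x 1 2 := by
    have h := congrFun (congrFun (hσsym x) 1) 2; simpa using h
  have cH22 : H x 2 2 = -H x 0 0 - H x 1 1 := by
    have h := hHtf x; simp [Matrix.trace, Matrix.diag, Fin.sum_univ_three] at h; linarith
  have cP10 : ∀ A : Fin 3, pd A (fun y => H y 1 0) x = pd A (fun y => H y 0 1) x := by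
    intro A
    rw [show (fun y => H y 1 0) = (fun y => H y 0 1) from
      funext fun y => by have h := congrFun (congrFun (hHsym y) 0) 1; simpa using h]
  have cP20 : ∀ A : Fin 3, pd A (fun y => H y 2 0) x = pd A (fun y => H y 0 2) x := by
    intro A
    rw [show (fun y => H y 2 0) = (fun y => H y 0 2) from
      funext fun y => by have h := congrFun (congrFun (hHsym y) 0) 2; simpa using h]
  have cP21 : ∀ A : Fin 3, pd A (fun y => H y 2 1) x = pd A (fun y => H y 1 2) x := by
    intro A
    rw [show (fun y => H y 2 1) = (fun y => H y 1 2) from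
      funext fun y => by have h := congrFun (congrFun (hHsym y) 1) 2; simpa using h]
  have hdiv : divV (fun y => mcross (σ y) (H y)) x
      = ∑ A, ∑ b, ∑ c, eps A b c *
          ∑ d, (pd A (fun y => σ y b d) x * H x d c + σ x b d * pd A (fun y => H y d c) x) := by
    unfold divV
    exact Finset.sum_congr rfl fun A _ => pd_mcross σ H hσ hH A x
  rw [hdiv]
  simp only [mcross, curlM, vwedge, hat, jac, tens, frob, dot3, Matrix.mul_apply,
    Matrix.mulVec, dotProduct, Matrix.trace, Matrix.diag, Matrix.add_apply,
    Matrix.sub_apply, Matrix.smul_apply, Matrix.transpose_apply, Matrix.one_apply,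
    Pi.smul_apply, smul_eq_mul, Fin.sum_univ_three, epsv000, epsv001, epsv002, epsv010, epsv011, epsv012, epsv020, epsv021, epsv022, epsv100, epsv101, epsv102, epsv110, epsv111, epsv112, epsv120, epsv121, epsv122, epsv200, epsv201, epsv202, epsv210, epsv211, epsv212, epsv220, epsv221, epsv222,
    neg_smul, if_true, if_false, reduceIte, Fin.reduceEq] at e10 e11 e12 e300 eR00 e301 eR01 e302 eR02 e310 eR10 e311 eR11 e312 eR12 e320 eR20 e321 eR21 e322 eR22 ⊢
  norm_num at e10 e11 e12 e300 eR00 e301 eR01 e302 eR02 e310 eR10 e311 eR11 e312 eR12 e320 eR20 e321 eR21 e322 eR22 ⊢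
  simp only [cH10, cH20, cH21, cH22, cS10, cS20, cS21, cP10, cP20, cP21] at e10 e11 e12 e300 eR00 e301 eR01 e302 eR02 e310 eR10 e311 eR11 e312 eR12 e320 eR20 e321 eR21 e322 eR22 ⊢
  linear_combination (-(H x 0 0)) * eR00 + (-(H x 0 1)) * eR01 + (-(H x 0 2)) * eR02 +
      (-(H x 0 1)) * eR10 + (-(H x 1 1)) * eR11 + (-(H x 1 2)) * eR12 +
      (-(H x 0 2)) * eR20 + (-(H x 1 2)) * eR21 + ((H x 0 0 + H x 1 1)) * eR22 +
      (-(σ x 0 0)) * e300 + (-(σ x 0 1)) * e301 + (-(σ x 0 2)) * e302 +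
      (-(σ x 0 1)) * e310 + (-(σ x 1 1)) * e311 + (-(σ x 1 2)) * e312 +
      (-(σ x 0 2)) * e320 + (-(σ x 1 2)) * e321 + (-(σ x 2 2)) * e322 +
      (-2 * a x 0) * e10 + (-2 * a x 1) * e11 + (-2 * a x 2) * e12
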